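/- arXiv:0902.0623 — 2 statements merged into one kernel-verified Lean document; each statement's English description precedes it below -/
import Mathlib

section
/- Let A be an implication sublattice of B with least element a := min A. Then μ(A, B) = (−1)^{|a|} · |a|! · μ(A, [a,1]), where μ is the Möbius function of the finite lattice 𝒜 and |a| is the number of atoms of B below a. -/
open scoped Classical

noncomputable section

/-- An implication sublattice of a Boolean algebra `B`: a nonempty subset closed under
the implication `x → y := xᶜ ⊔ y` and under meet. -/
def IsImplSublattice {B : Type*} [BooleanAlgebra B] (A : Set B) : Prop :=
  A.Nonempty ∧ (∀ x ∈ A, ∀ y ∈ A, xᶜ ⊔ y ∈ A) ∧ (∀ x ∈ A, ∀ y ∈ A, x ⊓ y ∈ A)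

/-- A Boolean subalgebra of `B`: a subset containing `⊥` and `⊤`, closed under
join, meet and complement. -/
def IsBoolSubalgebra {B : Type*} [BooleanAlgebra B] (C : Set B) : Prop :=
  (⊥ : B) ∈ C ∧ (⊤ : B) ∈ C ∧ (∀ x ∈ C, ∀ y ∈ C, x ⊔ y ∈ C) ∧
    (∀ x ∈ C, ∀ y ∈ C, x ⊓ y ∈ C) ∧ (∀ x ∈ C, xᶜ ∈ C)

/-- The lattice `𝒜` of implication sublattices of `B`, ordered by inclusion. -/
abbrev ImplLat (B : Type*) [BooleanAlgebra B] : Type _ := {A : Set B // IsImplSublattice A}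

/-- Any finite preorder is locally finite. -/
instance (priority := 100) fintypeLocallyFinite {X : Type*} [Fintype X] [Preorder X] :
    LocallyFiniteOrder X :=
  Fintype.toLocallyFiniteOrder

lemma isImplSublattice_univ {B : Type*} [BooleanAlgebra B] :
    IsImplSublattice (Set.univ : Set B) :=
  ⟨⟨⊤, trivial⟩, fun _ _ _ _ => trivial, fun _ _ _ _ => trivial⟩

lemma isImplSublattice_Ici {B : Type*} [BooleanAlgebra B] (c : B) :
    IsImplSublattice (Set.Ici c) :=
  ⟨⟨c, le_refl c⟩, fun _ _ _ hy => le_sup_of_le_right hy, fun _ hx _ hy => le_inf hx hy⟩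

lemma isImplSublattice_singleton_top {B : Type*} [BooleanAlgebra B] :
    IsImplSublattice ({⊤} : Set B) := by
  refine ⟨⟨⊤, rfl⟩, ?_, ?_⟩ <;> intro x hx y hy <;> simp_all

/-- `|x|`: the number of atoms of `B` lying below `x`. -/
def natomsBelow {B : Type*} [BooleanAlgebra B] [Fintype B] (x : B) : ℕ :=
  (Finset.univ.filter fun c : B => IsAtom c ∧ c ≤ x).card

open Finset IncidenceAlgebra

lemma mu_orderEmbedding {α β : Type*} [PartialOrder α] [PartialOrder β]
    [LocallyFiniteOrder α] [LocallyFiniteOrder β] [DecidableEq α] [DecidableEq β]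
    (f : α ↪o β) (hf : ∀ a b : α, ∀ c : β, f a ≤ c → c ≤ f b → ∃ x, f x = c) (a b : α) :
    mu ℤ (f a) (f b) = mu ℤ a b := by
  suffices H : ∀ n : ℕ, ∀ a b : α, (Finset.Icc a b).card ≤ n → mu ℤ (f a) (f b) = mu ℤ a b from
    H _ a b le_rfl
  intro n
  induction n with
  | zero =>
    intro a b hab
    have h : ¬ a ≤ b := by
      intro h
      have : 0 < (Finset.Icc a b).card := Finset.card_pos.2 ⟨a, Finset.mem_Icc.2 ⟨le_rfl, h⟩⟩
      omega
    rw [apply_eq_zero_of_not_le h, apply_eq_zero_of_not_le (by simpa using h)]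
  | succ n ih =>
    intro a b hcard
    by_cases hab : a ≤ b
    · rcases eq_or_ne a b with rfl | hne
      · simp
      · rw [mu_eq_neg_sum_Ico_of_ne hne, mu_eq_neg_sum_Ico_of_ne (fun h => hne (f.injective h))]
        have himg : Finset.Ico (f a) (f b) = (Finset.Ico a b).image f := by
          ext c
          simp only [Finset.mem_Ico, Finset.mem_image]
          constructor
          · rintro ⟨h1, h2⟩
            obtain ⟨x, rfl⟩ := hf a b c h1 h2.le
            exact ⟨x, ⟨f.le_iff_le.1 h1, f.lt_iff_lt.1 h2⟩, rfl⟩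
          · rintro ⟨x, hx, rfl⟩
            exact ⟨f.le_iff_le.2 hx.1, f.lt_iff_lt.2 hx.2⟩
        rw [himg, Finset.sum_image (fun x _ y _ h => f.injective h)]
        congr 1
        refine Finset.sum_congr rfl fun x hx => ?_
        rw [Finset.mem_Ico] at hx
        refine ih a x ?_
        have hss : Finset.Icc a x ⊂ Finset.Icc a b :=
          Finset.Icc_ssubset_Icc_right (hx.1.trans hx.2.le) le_rfl hx.2
        have := Finset.card_lt_card hss
        omega
    · rw [apply_eq_zero_of_not_le hab, apply_eq_zero_of_not_le (by simpa using hab)]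

section BA
variable {B : Type*} [BooleanAlgebra B]

lemma ba0 (a x : B) : x = (x ⊓ a) ⊔ (x ⊓ aᶜ) := by
  rw [← inf_sup_left, sup_compl_eq_top, inf_top_eq]

lemma part_ext {a x y : B} (h1 : x ⊓ a = y ⊓ a) (h2 : x ⊓ aᶜ = y ⊓ aᶜ) : x = y := by
  rw [ba0 a x, h1, h2, ← ba0 a y]

lemma bot_of_le_compl {a d : B} (hd : d ≤ a) : d ⊓ aᶜ = ⊥ :=
  disjoint_iff.1 (disjoint_compl_right.mono_left hd)

lemma ba1 {t x : B} (hx : x ≤ t) : (t ⊓ xᶜ) ⊔ x = t := by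
  rw [sup_comm, sup_inf_left, sup_compl_eq_top, inf_top_eq, sup_eq_right.2 hx]

lemma ba2 {t x y : B} (hx : x ≤ t) : (t ⊓ ((t ⊓ xᶜ) ⊔ y)ᶜ) ⊔ y = x ⊔ y := by
  rw [compl_sup, compl_inf, compl_compl, ← inf_assoc, inf_sup_left, inf_compl_eq_bot,
    bot_sup_eq, inf_eq_right.2 hx, sup_comm, sup_inf_left, sup_compl_eq_top, inf_top_eq,
    sup_comm]

lemma ba3 {t a x y : B} (hat : a ≤ t) :
    (a ⊓ (x ⊓ a)ᶜ) ⊔ (y ⊓ a) = ((t ⊓ xᶜ) ⊔ y) ⊓ a := by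
  have h : t ⊓ xᶜ ⊓ a = a ⊓ xᶜ := by
    rw [inf_comm t, inf_assoc, inf_eq_right.2 hat, inf_comm]
  rw [compl_inf, inf_sup_left, inf_compl_eq_bot, sup_bot_eq, inf_sup_right, h]

lemma ba4 {a x y : B} : (x ⊓ a) ⊓ (y ⊓ a) = (x ⊓ y) ⊓ a := by
  rw [inf_assoc, inf_comm a, inf_assoc, inf_idem, ← inf_assoc]

lemma ba7 {a x : B} (h : a ≤ x) : a ⊔ (x ⊓ aᶜ) = x := by
  rw [sup_inf_left, sup_eq_right.2 h, sup_compl_eq_top, inf_top_eq]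

lemma ba9 {a d y : B} (hd : d ≤ a) : (d ⊔ (y ⊓ aᶜ)) ⊓ a = d := by
  rw [inf_sup_right, inf_assoc, compl_inf_eq_bot, inf_bot_eq, sup_bot_eq, inf_eq_left.2 hd]

lemma ba11 (a x : B) : (x ⊔ a) ⊓ aᶜ = x ⊓ aᶜ := by
  rw [inf_sup_right, inf_compl_eq_bot, sup_bot_eq]

lemma ba6 {a d d' y y' : B} (hd : d ≤ a) (hd' : d' ≤ a) :
    (d ⊔ (y ⊓ aᶜ)) ⊓ (d' ⊔ (y' ⊓ aᶜ)) = (d ⊓ d') ⊔ ((y ⊓ y') ⊓ aᶜ) := by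
  have e1 : d ⊓ (y' ⊓ aᶜ) = ⊥ := by
    rw [inf_comm y', ← inf_assoc, bot_of_le_compl hd, bot_inf_eq]
  have e2 : (y ⊓ aᶜ) ⊓ d' = ⊥ := by
    rw [inf_comm, inf_comm y, ← inf_assoc, bot_of_le_compl hd', bot_inf_eq]
  rw [inf_sup_right, inf_sup_left, inf_sup_left, e1, e2, sup_bot_eq, bot_sup_eq, ba4]

lemma ba5 {t a d d' y y' : B} (hd : d ≤ a) (hd' : d' ≤ a) (hat : a ≤ t) :
    (t ⊓ (d ⊔ (y ⊓ aᶜ))ᶜ) ⊔ (d' ⊔ (y' ⊓ aᶜ)) =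
      ((a ⊓ dᶜ) ⊔ d') ⊔ (((t ⊓ yᶜ) ⊔ y') ⊓ aᶜ) := by
  have hZ : (d ⊔ (y ⊓ aᶜ))ᶜ = dᶜ ⊓ (yᶜ ⊔ a) := by rw [compl_sup, compl_inf, compl_compl]
  have h1 : t ⊓ (dᶜ ⊓ (yᶜ ⊔ a)) ⊓ a = a ⊓ dᶜ := by
    rw [inf_assoc t, inf_assoc dᶜ, inf_eq_right.2 (le_sup_right : a ≤ yᶜ ⊔ a),
      ← inf_assoc, inf_comm t dᶜ, inf_assoc, inf_eq_right.2 hat, inf_comm]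
  have h2 : t ⊓ (dᶜ ⊓ (yᶜ ⊔ a)) ⊓ aᶜ = (t ⊓ yᶜ) ⊓ aᶜ := by
    rw [inf_assoc t, inf_assoc dᶜ, ba11 a yᶜ, inf_comm yᶜ aᶜ, ← inf_assoc dᶜ,
      inf_eq_right.2 (compl_le_compl hd), inf_comm aᶜ yᶜ, ← inf_assoc]
  have L1 : ((t ⊓ (d ⊔ (y ⊓ aᶜ))ᶜ) ⊔ (d' ⊔ (y' ⊓ aᶜ))) ⊓ a = (a ⊓ dᶜ) ⊔ d' := by
    rw [hZ, inf_sup_right, ba9 hd', h1]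
  have R1 : (((a ⊓ dᶜ) ⊔ d') ⊔ (((t ⊓ yᶜ) ⊔ y') ⊓ aᶜ)) ⊓ a = (a ⊓ dᶜ) ⊔ d' := by
    rw [inf_sup_right, inf_assoc, compl_inf_eq_bot, inf_bot_eq, sup_bot_eq,
      inf_eq_left.2 (sup_le inf_le_left hd')]
  have L2 : ((t ⊓ (d ⊔ (y ⊓ aᶜ))ᶜ) ⊔ (d' ⊔ (y' ⊓ aᶜ))) ⊓ aᶜ =
      ((t ⊓ yᶜ) ⊓ aᶜ) ⊔ (y' ⊓ aᶜ) := by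
    rw [hZ, inf_sup_right, inf_sup_right, bot_of_le_compl hd', bot_sup_eq, h2,
      inf_assoc y', inf_idem]
  have R2 : (((a ⊓ dᶜ) ⊔ d') ⊔ (((t ⊓ yᶜ) ⊔ y') ⊓ aᶜ)) ⊓ aᶜ =
      ((t ⊓ yᶜ) ⊓ aᶜ) ⊔ (y' ⊓ aᶜ) := by
    have r1 : (a ⊓ dᶜ) ⊓ aᶜ = ⊥ := by
      rw [inf_comm a dᶜ, inf_assoc, inf_compl_eq_bot, inf_bot_eq]
    have r2 : (((t ⊓ yᶜ) ⊔ y') ⊓ aᶜ) ⊓ aᶜ = ((t ⊓ yᶜ) ⊓ aᶜ) ⊔ (y' ⊓ aᶜ) := by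
      rw [inf_assoc, inf_idem, inf_sup_right]
    rw [inf_sup_right, inf_sup_right, r1, bot_of_le_compl hd', sup_bot_eq, bot_sup_eq, r2]
  exact part_ext (L1.trans R1.symm) (L2.trans R2.symm)

lemma ba8 {t a x y : B} (hy : y ≤ t) :
    ((x ⊓ a) ⊔ y) ⊓ ((t ⊓ aᶜ) ⊔ (x ⊓ a)) = (x ⊓ a) ⊔ (y ⊓ aᶜ) := by
  rw [sup_comm (t ⊓ aᶜ) (x ⊓ a), ← sup_inf_left, ← inf_assoc, inf_eq_left.2 hy]
def RelSet (t : B) (D : Set B) : Prop :=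
  D.Nonempty ∧ D ⊆ Set.Iic t ∧ (∀ x ∈ D, ∀ y ∈ D, (t ⊓ xᶜ) ⊔ y ∈ D) ∧
    (∀ x ∈ D, ∀ y ∈ D, x ⊓ y ∈ D)

abbrev RelL (t : B) : Type _ := {D : Set B // RelSet t D}

lemma RelSet.top_mem {t : B} {D : Set B} (h : RelSet t D) : t ∈ D := by
  obtain ⟨⟨x, hx⟩, hsub, himp, -⟩ := h
  have h2 := himp x hx x hx
  rwa [ba1 (hsub hx)] at h2

lemma RelSet.sup_mem {t : B} {D : Set B} (h : RelSet t D) {x y : B}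
    (hx : x ∈ D) (hy : y ∈ D) : x ⊔ y ∈ D := by
  have h2 := h.2.2.1 _ (h.2.2.1 x hx y hy) y hy
  rwa [ba2 (h.2.1 hx)] at h2

lemma relSet_Iic (t : B) : RelSet t (Set.Iic t) :=
  ⟨⟨t, le_rfl⟩, le_rfl, fun _ _ y hy => sup_le (le_trans inf_le_left le_rfl) hy,
    fun x hx _ _ => le_trans inf_le_left hx⟩

lemma relSet_singleton (t : B) : RelSet t ({t} : Set B) := by
  refine ⟨⟨t, rfl⟩, by simp, ?_, ?_⟩ <;> intro x hx y hy <;>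
    simp only [Set.mem_singleton_iff] at * <;> subst hx <;> subst hy <;> simp

lemma relSet_pair {c t : B} (h : c ≤ t) : RelSet t ({c, t} : Set B) := by
  refine ⟨⟨c, Or.inl rfl⟩, ?_, ?_, ?_⟩
  · intro x hx; rcases hx with rfl | rfl
    · exact h
    · exact le_rfl
  · intro x hx y hy
    rcases hx with rfl | rfl <;> rcases hy with rfl | rfl
    · rw [ba1 h]; exact Or.inr rfl
    · rw [sup_eq_right.2 (le_trans inf_le_left le_rfl)]; exact Or.inr rfl
    · simp only [inf_compl_eq_bot, bot_sup_eq]; exact Or.inl rfl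
    · simp only [inf_compl_eq_bot, bot_sup_eq]; exact Or.inr rfl
  · intro x hx y hy
    rcases hx with rfl | rfl <;> rcases hy with rfl | rfl
    · rw [inf_idem]; exact Or.inl rfl
    · rw [inf_eq_left.2 h]; exact Or.inl rfl
    · rw [inf_eq_right.2 h]; exact Or.inl rfl
    · rw [inf_idem]; exact Or.inr rfl

lemma relSet_Icc {c t : B} (h : c ≤ t) : RelSet t (Set.Icc c t) :=
  ⟨⟨t, h, le_rfl⟩, fun x hx => hx.2,
    fun _ hx y hy => ⟨le_trans hy.1 le_sup_right, sup_le (le_trans inf_le_left le_rfl) hy.2⟩,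
    fun x hx y hy => ⟨le_inf hx.1 hy.1, le_trans inf_le_left hx.2⟩⟩

/-- The three structure maps. -/
def Dmap (a : B) (C : Set B) : Set B := (fun x => x ⊓ a) '' C
def Emap (a : B) (C : Set B) : Set B := C ∩ Set.Ici a
def Psi (a : B) (D E : Set B) : Set B := {x | ∃ d ∈ D, ∃ y ∈ E, x = d ⊔ (y ⊓ aᶜ)}

lemma relSet_Dmap {t a : B} {C : Set B} (hat : a ≤ t) (hC : RelSet t C) :
    RelSet a (Dmap a C) := by
  obtain ⟨⟨x0, hx0⟩, hsub, himp, hinf⟩ := hC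
  refine ⟨⟨x0 ⊓ a, ⟨x0, hx0, rfl⟩⟩, ?_, ?_, ?_⟩
  · rintro z ⟨x, hx, rfl⟩; exact inf_le_right
  · rintro z ⟨x, hx, rfl⟩ w ⟨y, hy, rfl⟩
    exact ⟨(t ⊓ xᶜ) ⊔ y, himp x hx y hy, (ba3 hat).symm⟩
  · rintro z ⟨x, hx, rfl⟩ w ⟨y, hy, rfl⟩
    exact ⟨x ⊓ y, hinf x hx y hy, ba4.symm⟩

lemma relSet_Emap {t a : B} {C : Set B} (hat : a ≤ t) (hC : RelSet t C) :
    RelSet t (Emap a C) := by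
  refine ⟨⟨t, hC.top_mem, hat⟩, fun x hx => hC.2.1 hx.1, ?_, ?_⟩
  · rintro x ⟨hxC, hxa⟩ y ⟨hyC, hya⟩
    exact ⟨hC.2.2.1 x hxC y hyC, le_trans hya le_sup_right⟩
  · rintro x ⟨hxC, hxa⟩ y ⟨hyC, hya⟩
    exact ⟨hC.2.2.2 x hxC y hyC, le_inf hxa hya⟩

lemma relSet_Psi {t a : B} {D E : Set B} (hat : a ≤ t) (hD : RelSet a D)
    (hE : RelSet t E) : RelSet t (Psi a D E) := by
  refine ⟨⟨a ⊔ (t ⊓ aᶜ), a, hD.top_mem, t, hE.top_mem, rfl⟩, ?_, ?_, ?_⟩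
  · rintro z ⟨d, hd, y, hy, rfl⟩
    exact sup_le (le_trans (hD.2.1 hd) hat) (le_trans inf_le_left (hE.2.1 hy))
  · rintro z ⟨d, hd, y, hy, rfl⟩ w ⟨d', hd', y', hy', rfl⟩
    exact ⟨(a ⊓ dᶜ) ⊔ d', hD.2.2.1 d hd d' hd', (t ⊓ yᶜ) ⊔ y', hE.2.2.1 y hy y' hy',
      ba5 (hD.2.1 hd) (hD.2.1 hd') hat⟩
  · rintro z ⟨d, hd, y, hy, rfl⟩ w ⟨d', hd', y', hy', rfl⟩
    exact ⟨d ⊓ d', hD.2.2.2 d hd d' hd', y ⊓ y', hE.2.2.2 y hy y' hy',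
      ba6 (hD.2.1 hd) (hD.2.1 hd')⟩

lemma psi_dmap_emap {t a : B} {C : Set B} (hat : a ≤ t) (hC : RelSet t C) (haC : a ∈ C) :
    Psi a (Dmap a C) (Emap a C) = C := by
  apply Set.eq_of_subset_of_subset
  · rintro z ⟨d, ⟨u, hu, rfl⟩, y, ⟨hyC, hya⟩, rfl⟩
    dsimp only
    rw [← ba8 (a := a) (x := u) (hC.2.1 hyC)]
    exact hC.2.2.2 _ (hC.sup_mem (hC.2.2.2 u hu a haC) hyC) _
      (hC.2.2.1 a haC (u ⊓ a) (hC.2.2.2 u hu a haC))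
  · intro x hx
    refine ⟨x ⊓ a, ⟨x, hx, rfl⟩, x ⊔ a, ⟨hC.sup_mem hx haC, le_sup_right⟩, ?_⟩
    rw [ba11, ← ba0]

lemma dmap_psi {a : B} {D E : Set B} (hD : RelSet a D) (hE : E.Nonempty) :
    Dmap a (Psi a D E) = D := by
  apply Set.eq_of_subset_of_subset
  · rintro z ⟨x, ⟨d, hd, y, hy, rfl⟩, rfl⟩
    dsimp only
    rw [ba9 (hD.2.1 hd)]; exact hd
  · intro d hd
    obtain ⟨y, hy⟩ := hE
    exact ⟨d ⊔ (y ⊓ aᶜ), ⟨d, hd, y, hy, rfl⟩, ba9 (hD.2.1 hd)⟩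

lemma emap_psi {a : B} {D E : Set B} (hD : RelSet a D) (hEa : E ⊆ Set.Ici a) :
    Emap a (Psi a D E) = E := by
  apply Set.eq_of_subset_of_subset
  · rintro z ⟨⟨d, hd, y, hy, rfl⟩, (hz : a ≤ d ⊔ (y ⊓ aᶜ))⟩
    have hda : d = a := by
      have h1 := ba9 (hD.2.1 hd) (y := y)
      rw [inf_eq_right.2 hz] at h1
      exact h1.symm
    subst hda
    rw [ba7 (hEa hy)]; exact hy
  · intro y hy
    exact ⟨⟨a, hD.top_mem, y, hy, (ba7 (hEa hy)).symm⟩, hEa hy⟩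

lemma Psi_mono {a : B} {D D' E E' : Set B} (h1 : D ⊆ D') (h2 : E ⊆ E') :
    Psi a D E ⊆ Psi a D' E' := by
  rintro z ⟨d, hd, y, hy, rfl⟩
  exact ⟨d, h1 hd, y, h2 hy, rfl⟩
def topRel (t : B) : RelL t := ⟨Set.Iic t, relSet_Iic t⟩

/-- The key order isomorphism: the interval `[A, ⊤]` in the lattice of relative implication
sublattices factors as `RelL a × [A, Icc a t]` where `a = min A`. -/
def Phi {t a : B} {A : Set B} (hA : RelSet t A) (ha : IsLeast A a) :
    {C : RelL t // (⟨A, hA⟩ : RelL t) ≤ C} ≃o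
      RelL a × {C : RelL t // (⟨A, hA⟩ : RelL t) ≤ C ∧
        C ≤ ⟨Set.Icc a t, relSet_Icc (hA.2.1 ha.1)⟩} where
  toFun C := (⟨Dmap a C.1.1, relSet_Dmap (hA.2.1 ha.1) C.1.2⟩,
    ⟨⟨Emap a C.1.1, relSet_Emap (hA.2.1 ha.1) C.1.2⟩,
      fun x hx => ⟨C.2 hx, ha.2 hx⟩,
      fun x hx => ⟨hx.2, C.1.2.2.1 hx.1⟩⟩)
  invFun P := ⟨⟨Psi a P.1.1 P.2.1.1, relSet_Psi (hA.2.1 ha.1) P.1.2 P.2.1.2⟩,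
    fun x hx => ⟨a, P.1.2.top_mem, x, P.2.2.1 hx, (ba7 (ha.2 hx)).symm⟩⟩
  left_inv C := Subtype.ext (Subtype.ext (psi_dmap_emap (hA.2.1 ha.1) C.1.2 (C.2 ha.1)))
  right_inv P := by
    refine Prod.ext ?_ ?_
    · exact Subtype.ext (dmap_psi P.1.2 ⟨t, P.2.1.2.top_mem⟩)
    · exact Subtype.ext (Subtype.ext (emap_psi P.1.2 (fun y hy => (P.2.2.2 hy).1)))
  map_rel_iff' := by
    intro C C'
    constructor
    · intro h
      have h1 : Dmap a C.1.1 ⊆ Dmap a C'.1.1 := h.1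
      have h2 : Emap a C.1.1 ⊆ Emap a C'.1.1 := h.2
      have h3 : C.1.1 ⊆ C'.1.1 := by
        rw [← psi_dmap_emap (hA.2.1 ha.1) C.1.2 (C.2 ha.1),
          ← psi_dmap_emap (hA.2.1 ha.1) C'.1.2 (C'.2 ha.1)]
        exact Psi_mono h1 h2
      exact h3
    · intro h
      exact ⟨Set.image_mono h, Set.inter_subset_inter_left _ h⟩

variable [Fintype B]

/-- `Fmu a` is `μ(⊥, ⊤)` in the lattice of implication sublattices of `[⊥, a]`. -/
def Fmu (a : B) : ℤ := mu ℤ (⟨({a} : Set B), relSet_singleton a⟩ : RelL a) (topRel a)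

lemma mu_fact {t : B} {A : Set B} (hA : RelSet t A) {a : B} (ha : IsLeast A a) :
    mu ℤ (⟨A, hA⟩ : RelL t) (topRel t) =
      Fmu a * mu ℤ (⟨A, hA⟩ : RelL t) ⟨Set.Icc a t, relSet_Icc (hA.2.1 ha.1)⟩ := by
  have hat : a ≤ t := hA.2.1 ha.1
  set AEl : RelL t := ⟨A, hA⟩ with hAEl
  set IccEl : RelL t := ⟨Set.Icc a t, relSet_Icc hat⟩ with hIccEl
  have hATop : AEl ≤ topRel t := hA.2.1
  have hAIcc : AEl ≤ IccEl := fun x hx => ⟨ha.2 hx, hA.2.1 hx⟩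
  -- step 1: pass to the subtype of sublattices containing A
  let e1 : {C : RelL t // AEl ≤ C} ↪o RelL t := OrderEmbedding.subtype _
  have h1 : mu ℤ AEl (topRel t) =
      mu ℤ (⟨AEl, le_refl AEl⟩ : {C : RelL t // AEl ≤ C}) ⟨topRel t, hATop⟩ :=
    mu_orderEmbedding e1 (fun x _ c hx _ => ⟨⟨c, le_trans x.2 hx⟩, rfl⟩)
      ⟨AEl, le_refl AEl⟩ ⟨topRel t, hATop⟩
  -- step 2: apply the isomorphism
  let Φ := Phi hA ha
  have h2 : mu ℤ (⟨AEl, le_refl AEl⟩ : {C : RelL t // AEl ≤ C}) ⟨topRel t, hATop⟩ =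
      mu ℤ (Φ ⟨AEl, le_refl AEl⟩) (Φ ⟨topRel t, hATop⟩) :=
    (mu_orderEmbedding Φ.toOrderEmbedding
      (fun _ _ c _ _ => ⟨Φ.symm c, Φ.apply_symm_apply c⟩)
      ⟨AEl, le_refl AEl⟩ ⟨topRel t, hATop⟩).symm
  -- step 3: compute the images
  have hDA : Dmap a A = {a} := by
    ext z
    constructor
    · rintro ⟨x, hx, rfl⟩
      exact inf_eq_right.2 (ha.2 hx)
    · intro hz
      exact ⟨a, ha.1, (inf_idem a).trans (Set.mem_singleton_iff.1 hz).symm⟩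
  have hEA : Emap a A = A := Set.inter_eq_left.2 (fun x hx => ha.2 hx)
  have hDT : Dmap a (Set.Iic t) = Set.Iic a := by
    ext z
    constructor
    · rintro ⟨x, _, rfl⟩
      exact inf_le_right
    · intro hz
      exact ⟨z, le_trans hz hat, inf_eq_left.2 hz⟩
  have hET : Emap a (Set.Iic t) = Set.Icc a t := by
    ext z
    exact ⟨fun h => ⟨h.2, h.1⟩, fun h => ⟨h.2, h.1⟩⟩
  have hΦ1 : Φ ⟨AEl, le_refl AEl⟩ =
      ((⟨({a} : Set B), relSet_singleton a⟩ : RelL a), ⟨AEl, le_refl AEl, hAIcc⟩) :=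
    Prod.ext (Subtype.ext hDA) (Subtype.ext (Subtype.ext hEA))
  have hΦ2 : Φ ⟨topRel t, hATop⟩ = (topRel a, ⟨IccEl, hAIcc, le_refl IccEl⟩) :=
    Prod.ext (Subtype.ext hDT) (Subtype.ext (Subtype.ext hET))
  rw [hΦ1, hΦ2] at h2
  -- step 4: Möbius function of a product
  have h3 : mu ℤ ((⟨({a} : Set B), relSet_singleton a⟩ : RelL a), (⟨AEl, le_refl AEl, hAIcc⟩ :
        {C : RelL t // AEl ≤ C ∧ C ≤ IccEl}))
      (topRel a, ⟨IccEl, hAIcc, le_refl IccEl⟩) =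
      mu ℤ (⟨({a} : Set B), relSet_singleton a⟩ : RelL a) (topRel a) *
        mu ℤ (⟨AEl, le_refl AEl, hAIcc⟩ : {C : RelL t // AEl ≤ C ∧ C ≤ IccEl})
          ⟨IccEl, hAIcc, le_refl IccEl⟩ := by
    rw [← mu_prod_mu, IncidenceAlgebra.prod_mk]
  -- step 5: remove the second subtype
  let e2 : {C : RelL t // AEl ≤ C ∧ C ≤ IccEl} ↪o RelL t := OrderEmbedding.subtype _
  have h4 : mu ℤ (⟨AEl, le_refl AEl, hAIcc⟩ : {C : RelL t // AEl ≤ C ∧ C ≤ IccEl})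
      ⟨IccEl, hAIcc, le_refl IccEl⟩ = mu ℤ AEl IccEl :=
    (mu_orderEmbedding e2
      (fun x y c hx hy => ⟨⟨c, le_trans x.2.1 hx, le_trans hy y.2.2⟩, rfl⟩)
      ⟨AEl, le_refl AEl, hAIcc⟩ ⟨IccEl, hAIcc, le_refl IccEl⟩).symm
  rw [h1, h2, h3, h4]
  rfl

/-- The least element of a relative implication sublattice. -/
def minOf {t : B} (D : RelL t) : B :=
  D.1.toFinset.inf' (by rw [Set.toFinset_nonempty]; exact D.2.1) id

lemma minOf_isLeast {t : B} (D : RelL t) : IsLeast D.1 (minOf D) :=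
  ⟨Finset.inf'_mem D.1 D.2.2.2.2 _ _ id (fun i hi => Set.mem_toFinset.1 hi),
   fun x hx => Finset.inf'_le id (Set.mem_toFinset.2 hx)⟩

lemma minOf_le_ambient {t : B} (D : RelL t) : minOf D ≤ t := D.2.2.1 (minOf_isLeast D).1

/-- `c` is either `t` or covered by `t`. -/
def CovP (t c : B) : Prop := c ≤ t ∧ Set.Icc c t = ({c, t} : Set B)

lemma covp_self (t : B) : CovP t t :=
  ⟨le_rfl, by rw [Set.Icc_self, Set.pair_eq_singleton]⟩

lemma rec_identity {t : B} (ht : t ≠ ⊥) :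
    ∑ c ∈ Finset.univ.filter (fun c : B => CovP t c), Fmu c = 0 := by
  set botel : RelL t := ⟨({t} : Set B), relSet_singleton t⟩ with hbotel
  have hbotne : botel ≠ topRel t := by
    intro h
    have h2 : (⊥ : B) ∈ ({t} : Set B) := by
      have h3 : ({t} : Set B) = Set.Iic t := congrArg Subtype.val h
      rw [h3]
      exact bot_le
    exact ht (Set.mem_singleton_iff.1 h2).symm
  have hIcc : Finset.Icc botel (topRel t) = Finset.univ := by
    ext C
    simp only [Finset.mem_Icc, Finset.mem_univ, iff_true]
    exact ⟨fun x hx => by rw [Set.mem_singleton_iff.1 hx]; exact C.2.top_mem, C.2.2.1⟩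
  have h0 : ∑ C ∈ (Finset.univ : Finset (RelL t)), mu ℤ C (topRel t) = 0 := by
    have h := sum_Icc_mu_left (𝕜 := ℤ) botel (topRel t)
    rw [if_neg hbotne, hIcc] at h
    exact h
  have hfib : ∑ c ∈ (Finset.univ : Finset B),
      ∑ C ∈ (Finset.univ : Finset (RelL t)).filter (fun C => minOf C = c),
        mu ℤ C (topRel t) = ∑ C ∈ (Finset.univ : Finset (RelL t)), mu ℤ C (topRel t) :=
    Finset.sum_fiberwise_of_maps_to (fun x _ => Finset.mem_univ _) _
  have hcval : ∀ c : B,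
      (∑ C ∈ (Finset.univ : Finset (RelL t)).filter (fun C => minOf C = c),
        mu ℤ C (topRel t)) = if CovP t c then Fmu c else 0 := by
    intro c
    by_cases hct : c ≤ t
    · have hfilter : (Finset.univ : Finset (RelL t)).filter (fun C => minOf C = c) =
          Finset.Icc (⟨({c, t} : Set B), relSet_pair hct⟩ : RelL t)
            ⟨Set.Icc c t, relSet_Icc hct⟩ := by
        ext C
        simp only [Finset.mem_filter, Finset.mem_univ, true_and, Finset.mem_Icc]
        constructor
        · intro h
          have hl : IsLeast C.1 c := h ▸ minOf_isLeast C
          constructor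
          · intro x hx
            rcases hx with rfl | hx
            · exact hl.1
            · rw [Set.mem_singleton_iff.1 hx]; exact C.2.top_mem
          · intro x hx
            exact ⟨hl.2 hx, C.2.2.1 hx⟩
        · rintro ⟨h1, h2⟩
          have hl : IsLeast C.1 c := ⟨h1 (Or.inl rfl), fun x hx => (h2 hx).1⟩
          exact ((minOf_isLeast C).unique hl)
      rw [hfilter]
      have hstep : ∀ C ∈ Finset.Icc (⟨({c, t} : Set B), relSet_pair hct⟩ : RelL t)
          ⟨Set.Icc c t, relSet_Icc hct⟩,
          mu ℤ C (topRel t) = Fmu c * mu ℤ C (⟨Set.Icc c t, relSet_Icc hct⟩ : RelL t) := by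
        intro C hC
        rw [Finset.mem_Icc] at hC
        have hl : IsLeast C.1 c := ⟨hC.1 (Or.inl rfl), fun x hx => (hC.2 hx).1⟩
        exact mu_fact C.2 hl
      rw [Finset.sum_congr rfl hstep, ← Finset.mul_sum, sum_Icc_mu_left]
      by_cases hpq : Set.Icc c t = ({c, t} : Set B)
      · rw [if_pos (Subtype.ext hpq.symm), if_pos ⟨hct, hpq⟩, mul_one]
      · rw [if_neg (fun h => hpq (congrArg Subtype.val h).symm), if_neg (fun h => hpq h.2),
          mul_zero]
    · have hempty : (Finset.univ : Finset (RelL t)).filter (fun C => minOf C = c) = ∅ := by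
        refine Finset.filter_eq_empty_iff.2 (fun C _ h => hct (h ▸ minOf_le_ambient C))
      rw [hempty, Finset.sum_empty, if_neg (fun h => hct h.1)]
  have h1 : ∑ c ∈ (Finset.univ : Finset B), (if CovP t c then Fmu c else 0) = 0 := by
    rw [← Finset.sum_congr rfl (fun c _ => hcval c), hfib, h0]
  rw [Finset.sum_filter]
  exact h1

lemma Fmu_rec {t : B} (ht : t ≠ ⊥) :
    Fmu t = -∑ c ∈ (Finset.univ.filter (fun c : B => CovP t c)).erase t, Fmu c := by
  have h := rec_identity ht
  have ht' : t ∈ Finset.univ.filter (fun c : B => CovP t c) :=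
    Finset.mem_filter.2 ⟨Finset.mem_univ t, covp_self t⟩
  rw [← Finset.add_sum_erase _ _ ht'] at h
  linarith

lemma sdiff_atom_of_covp {c t : B} (h : CovP t c) (hne : c ≠ t) : IsAtom (t \ c) := by
  constructor
  · rw [Ne, sdiff_eq_bot_iff]
    exact fun hle => hne (le_antisymm h.1 hle)
  · intro b hb
    have hb1 : c ⊔ b ∈ Set.Icc c t := ⟨le_sup_left, sup_le h.1 (le_trans hb.le sdiff_le)⟩
    rw [h.2] at hb1
    simp only [Set.mem_insert_iff, Set.mem_singleton_iff] at hb1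
    rcases hb1 with h1 | h1
    · have hbc : b ≤ c := le_trans le_sup_right (le_of_eq h1)
      have hbc' : b ≤ cᶜ := le_trans hb.le (by rw [sdiff_eq]; exact inf_le_right)
      have : b ≤ c ⊓ cᶜ := le_inf hbc hbc'
      rw [inf_compl_eq_bot] at this
      exact le_bot_iff.1 this
    · exfalso
      have h2 : t \ c ≤ b := by
        rw [sdiff_le_iff]
        exact le_of_eq h1.symm
      exact hb.not_ge h2

lemma covp_of_atom {s t : B} (hs : IsAtom s) (hst : s ≤ t) :
    CovP t (t \ s) ∧ t \ s ≠ t := by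
  refine ⟨⟨sdiff_le, ?_⟩, ?_⟩
  · ext z
    simp only [Set.mem_Icc, Set.mem_insert_iff, Set.mem_singleton_iff]
    constructor
    · rintro ⟨h1, h2⟩
      have hz : z = (t \ s) ⊔ (z ⊓ s) := by
        have h3 : z = z ⊓ ((t \ s) ⊔ s) := by
          rw [sdiff_sup_cancel hst, inf_eq_left.2 h2]
        conv_lhs => rw [h3]
        rw [inf_sup_left, inf_eq_right.2 h1]
      rcases hs.le_iff.1 (inf_le_right : z ⊓ s ≤ s) with h3 | h3
      · left; rw [hz, h3, sup_bot_eq]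
      · right; rw [hz, h3, sdiff_sup_cancel hst]
    · rintro (rfl | rfl)
      · exact ⟨le_rfl, sdiff_le⟩
      · exact ⟨sdiff_le, le_rfl⟩
  · intro h
    have h1 : s ≤ t \ s := h.symm ▸ hst
    have h2 : s ≤ sᶜ := le_trans h1 (by rw [sdiff_eq]; exact inf_le_right)
    have h3 : s ≤ s ⊓ sᶜ := le_inf le_rfl h2
    rw [inf_compl_eq_bot] at h3
    exact hs.1 (le_bot_iff.1 h3)

lemma natomsBelow_succ {c t : B} (h : CovP t c) (hne : c ≠ t) :
    natomsBelow t = natomsBelow c + 1 := by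
  have hatom : IsAtom (t \ c) := sdiff_atom_of_covp h hne
  unfold natomsBelow
  have hsplit : Finset.univ.filter (fun s : B => IsAtom s ∧ s ≤ t) =
      insert (t \ c) (Finset.univ.filter (fun s : B => IsAtom s ∧ s ≤ c)) := by
    ext s
    simp only [Finset.mem_filter, Finset.mem_univ, true_and, Finset.mem_insert]
    constructor
    · rintro ⟨hs, hst⟩
      by_cases hsc : s ≤ c
      · exact Or.inr ⟨hs, hsc⟩
      · left
        have h1 : s ⊓ c = ⊥ := by
          rcases hs.le_iff.1 (inf_le_left : s ⊓ c ≤ s) with h1 | h1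
          · exact h1
          · exact absurd (h1 ▸ (inf_le_right : s ⊓ c ≤ c)) hsc
        have h2 : s ≤ cᶜ := le_compl_iff_disjoint_right.2 (disjoint_iff.2 h1)
        have h3 : s ≤ t \ c := by rw [sdiff_eq]; exact le_inf hst h2
        rcases hatom.le_iff.1 h3 with h4 | h4
        · exact absurd h4 hs.1
        · exact h4
    · rintro (rfl | ⟨hs, hsc⟩)
      · exact ⟨hatom, sdiff_le⟩
      · exact ⟨hs, hsc.trans h.1⟩
  rw [hsplit, Finset.card_insert_of_notMem]
  intro hmem
  rw [Finset.mem_filter] at hmem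
  have h1 : t \ c ≤ cᶜ := by rw [sdiff_eq]; exact inf_le_right
  have h2 : t \ c ≤ c ⊓ cᶜ := le_inf hmem.2.2 h1
  rw [inf_compl_eq_bot] at h2
  exact hatom.1 (le_bot_iff.1 h2)

lemma card_covp (t : B) :
    ((Finset.univ.filter (fun c : B => CovP t c)).erase t).card = natomsBelow t := by
  refine Finset.card_nbij' (fun c => t \ c) (fun s => t \ s) ?_ ?_ ?_ ?_
  · intro c hc
    rw [Finset.mem_coe, Finset.mem_erase, Finset.mem_filter] at hc
    exact Finset.mem_filter.2 ⟨Finset.mem_univ _,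
      sdiff_atom_of_covp hc.2.2 hc.1, sdiff_le⟩
  · intro s hsf
    rw [Finset.mem_coe, Finset.mem_filter] at hsf
    obtain ⟨hcov, hne⟩ := covp_of_atom hsf.2.1 hsf.2.2
    exact Finset.mem_erase.2 ⟨hne, Finset.mem_filter.2 ⟨Finset.mem_univ _, hcov⟩⟩
  · intro c hc
    rw [Finset.mem_coe, Finset.mem_erase, Finset.mem_filter] at hc
    exact sdiff_sdiff_eq_self hc.2.2.1
  · intro s hsf
    rw [Finset.mem_coe, Finset.mem_filter] at hsf
    exact sdiff_sdiff_eq_self hsf.2.2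

lemma natomsBelow_bot : natomsBelow (⊥ : B) = 0 := by
  rw [natomsBelow, Finset.card_eq_zero]
  refine Finset.filter_eq_empty_iff.2 ?_
  rintro c - ⟨hc, hcb⟩
  exact hc.1 (le_bot_iff.1 hcb)

lemma eq_bot_of_natomsBelow_eq_zero {t : B} (h : natomsBelow t = 0) : t = ⊥ := by
  rcases eq_bot_or_exists_atom_le t with h1 | ⟨s, hs, hst⟩
  · exact h1
  · exfalso
    have hmem : s ∈ Finset.univ.filter (fun c : B => IsAtom c ∧ c ≤ t) :=
      Finset.mem_filter.2 ⟨Finset.mem_univ _, hs, hst⟩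
    rw [natomsBelow, Finset.card_eq_zero] at h
    rw [h] at hmem
    exact absurd hmem (Finset.notMem_empty s)

lemma Fmu_bot : Fmu (⊥ : B) = 1 := by
  have h : (⟨({⊥} : Set B), relSet_singleton ⊥⟩ : RelL (⊥ : B)) = topRel ⊥ :=
    Subtype.ext Set.Iic_bot.symm
  rw [Fmu, h, mu_self]

theorem Fmu_eq (t : B) :
    Fmu t = (-1 : ℤ) ^ natomsBelow t * (natomsBelow t).factorial := by
  suffices H : ∀ n : ℕ, ∀ t : B, natomsBelow t = n →
      Fmu t = (-1 : ℤ) ^ n * (n.factorial : ℤ) by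
    simpa using H (natomsBelow t) t rfl
  intro n
  induction n with
  | zero =>
    intro t h
    rw [eq_bot_of_natomsBelow_eq_zero h, Fmu_bot]
    simp
  | succ n ih =>
    intro t h
    have ht : t ≠ ⊥ := by
      rintro rfl
      rw [natomsBelow_bot] at h
      omega
    have hterm : ∀ c ∈ (Finset.univ.filter (fun c : B => CovP t c)).erase t,
        Fmu c = (-1 : ℤ) ^ n * (n.factorial : ℤ) := by
      intro c hc
      rw [Finset.mem_erase, Finset.mem_filter] at hc
      have hsucc := natomsBelow_succ hc.2.2 hc.1
      refine ih c ?_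
      omega
    rw [Fmu_rec ht, Finset.sum_congr rfl hterm, Finset.sum_const, card_covp, h]
    rw [nsmul_eq_mul]
    push_cast [Nat.factorial_succ, pow_succ]
    ring
end BA

section Glue
variable {B : Type*} [BooleanAlgebra B]

lemma relSet_top_iff {S : Set B} : RelSet (⊤ : B) S ↔ IsImplSublattice S := by
  constructor
  · rintro ⟨h1, h2, h3, h4⟩
    refine ⟨h1, fun x hx y hy => ?_, h4⟩
    have h5 := h3 x hx y hy
    rwa [top_inf_eq] at h5
  · rintro ⟨h1, h2, h3⟩
    refine ⟨h1, fun x _ => le_top, fun x hx y hy => ?_, h3⟩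
    rw [top_inf_eq]
    exact h2 x hx y hy

/-- Implication sublattices of `B` are the same as `⊤`-relative implication sublattices. -/
def toRel : ImplLat B ≃o RelL (⊤ : B) where
  toFun A := ⟨A.1, relSet_top_iff.2 A.2⟩
  invFun D := ⟨D.1, relSet_top_iff.1 D.2⟩
  left_inv _ := rfl
  right_inv _ := rfl
  map_rel_iff' := Iff.rfl

end Glue

/-- Let `A ∈ 𝒜` with least element `a`.  Then
`μ(A, B) = (−1)^{|a|} · |a|! · μ(A, [a,⊤])`, where `μ` is the Möbius function of the
finite lattice `𝒜` and `|a|` is the number of atoms of `B` below `a`. -/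
theorem mu_top_eq_sign_factorial_mul {B : Type*} [Fintype B] [BooleanAlgebra B] [Nontrivial B]
    (A : Set B) (hA : IsImplSublattice A) (a : B) (ha : IsLeast A a) :
    IncidenceAlgebra.mu ℤ (⟨A, hA⟩ : ImplLat B) ⟨Set.univ, isImplSublattice_univ⟩ =
      (-1 : ℤ) ^ natomsBelow a * (natomsBelow a).factorial *
        IncidenceAlgebra.mu ℤ (⟨A, hA⟩ : ImplLat B) ⟨Set.Ici a, isImplSublattice_Ici a⟩ := by
  have hA' : RelSet (⊤ : B) A := relSet_top_iff.2 hA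
  have hsurj : ∀ x y : ImplLat B, ∀ c : RelL (⊤ : B),
      toRel x ≤ c → c ≤ toRel y → ∃ z, toRel z = c :=
    fun _ _ c _ _ => ⟨toRel.symm c, rfl⟩
  have h1 := mu_orderEmbedding (toRel (B := B)).toOrderEmbedding hsurj
    ⟨A, hA⟩ ⟨Set.univ, isImplSublattice_univ⟩
  have h2 := mu_orderEmbedding (toRel (B := B)).toOrderEmbedding hsurj
    ⟨A, hA⟩ ⟨Set.Ici a, isImplSublattice_Ici a⟩
  have e1 : ((toRel (B := B)).toOrderEmbedding (⟨A, hA⟩ : ImplLat B) : RelL (⊤ : B)) = ⟨A, hA'⟩ := rfl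
  have e2 : ((toRel (B := B)).toOrderEmbedding (⟨Set.univ, isImplSublattice_univ⟩ : ImplLat B) : RelL (⊤ : B)) =
      topRel ⊤ := Subtype.ext Set.Iic_top.symm
  have e3 : ((toRel (B := B)).toOrderEmbedding (⟨Set.Ici a, isImplSublattice_Ici a⟩ : ImplLat B) : RelL (⊤ : B)) =
      ⟨Set.Icc a ⊤, relSet_Icc le_top⟩ := Subtype.ext Set.Icc_top.symm
  have hfact := mu_fact hA' ha
  rw [← h1, e1, e2, hfact, Fmu_eq, ← h2, e1, e3]
end
end

section
/- The map sending a Boolean subalgebra C of B to the set partition of the atoms of B whose blocks are the sets {atoms of B below c}, for c ranging over the atoms of C, is a bijection from the set of Boolean subalgebras of B onto the set of partitions of the atoms of B; moreover for Boolean subalgebras C, D one has C ⊆ D if and only if the partition associated to D refines the partition associated to C. -/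
open scoped Classical

noncomputable section

/-- `d` is an atom of the subalgebra `C`: a minimal element of `C \ {⊥}`. -/
def IsAtomOf {B : Type*} [BooleanAlgebra B] (C : Set B) (d : B) : Prop :=
  d ∈ C ∧ d ≠ ⊥ ∧ ∀ x ∈ C, x ≠ ⊥ → x ≤ d → x = d

/-- The set partition of the atoms of `B` associated to a Boolean subalgebra `C`:
its blocks are the sets of atoms of `B` lying below `c`, for `c` an atom of `C`. -/
def blocksOf {B : Type*} [BooleanAlgebra B] (C : Set B) : Set (Set {c : B // IsAtom c}) :=
  {S | ∃ d : B, IsAtomOf C d ∧ S = {c : {c : B // IsAtom c} | c.1 ≤ d}}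

section Helpers

variable {B : Type*} [Fintype B] [BooleanAlgebra B]

/-- The set of atoms of `B` below `x`. -/
def atomsBelow (x : B) : Set {c : B // IsAtom c} := {c : {c : B // IsAtom c} | c.1 ≤ x}

lemma mem_atomsBelow {x : B} {c : {c : B // IsAtom c}} : c ∈ atomsBelow x ↔ c.1 ≤ x := Iff.rfl

lemma exists_atom_le {x : B} (hx : x ≠ ⊥) : ∃ c : B, IsAtom c ∧ c ≤ x := by
  rcases (eq_bot_or_exists_atom_le x).resolve_left hx with ⟨c, hc, hle⟩
  exact ⟨c, hc, hle⟩

lemma atomsBelow_nonempty {x : B} (hx : x ≠ ⊥) : (atomsBelow x).Nonempty := by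
  obtain ⟨c, hc, hle⟩ := exists_atom_le hx
  exact ⟨⟨c, hc⟩, hle⟩

lemma atomsBelow_bot : atomsBelow (⊥ : B) = ∅ := by
  ext c; simp [mem_atomsBelow, le_bot_iff, c.2.1]

lemma atomsBelow_top : atomsBelow (⊤ : B) = Set.univ := by
  ext c; simp [mem_atomsBelow]

lemma atom_le_sup {c x y : B} (hc : IsAtom c) (h : c ≤ x ⊔ y) : c ≤ x ∨ c ≤ y := by
  rcases hc.le_iff.mp (inf_le_left : c ⊓ x ≤ c) with h1 | h1
  · rcases hc.le_iff.mp (inf_le_left : c ⊓ y ≤ c) with h2 | h2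
    · exfalso
      apply hc.1
      have : c = c ⊓ (x ⊔ y) := (inf_eq_left.mpr h).symm
      rw [inf_sup_left, h1, h2, sup_idem] at this
      -- this : c = ⊥
      exact this
    · exact Or.inr (by rw [← h2]; exact inf_le_right)
  · exact Or.inl (by rw [← h1]; exact inf_le_right)

lemma atomsBelow_sup {x y : B} : atomsBelow (x ⊔ y) = atomsBelow x ∪ atomsBelow y := by
  ext c
  constructor
  · intro h; exact atom_le_sup c.2 h
  · rintro (h | h)
    · exact le_trans h le_sup_left
    · exact le_trans h le_sup_right

lemma atomsBelow_inf {x y : B} : atomsBelow (x ⊓ y) = atomsBelow x ∩ atomsBelow y := by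
  ext c
  simp [mem_atomsBelow, le_inf_iff, Set.mem_inter_iff]

lemma atom_le_compl {c x : B} (hc : IsAtom c) : c ≤ xᶜ ↔ ¬ c ≤ x := by
  constructor
  · intro h h'
    exact hc.1 (le_bot_iff.mp (by simpa using le_inf h' h))
  · intro h'
    rcases hc.le_iff.mp (inf_le_left : c ⊓ x ≤ c) with h1 | h1
    · exact le_compl_iff_disjoint_right.mpr (disjoint_iff.mpr h1)
    · exact absurd (by rw [← h1]; exact inf_le_right) h'

lemma atomsBelow_compl {x : B} : atomsBelow xᶜ = (atomsBelow x)ᶜ := by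
  ext c
  simp [mem_atomsBelow, atom_le_compl c.2, Set.mem_compl_iff]

lemma le_iff_atomsBelow {x y : B} : x ≤ y ↔ atomsBelow x ⊆ atomsBelow y := by
  constructor
  · intro h c hc; exact le_trans hc h
  · intro h
    by_contra hxy
    have hne : x ⊓ yᶜ ≠ ⊥ := by
      intro hb
      exact hxy (sdiff_eq_bot_iff.mp (by rw [sdiff_eq]; exact hb))
    obtain ⟨c, hc, hle⟩ := exists_atom_le hne
    have h1 : c ≤ x := hle.trans inf_le_left
    have h2 : c ≤ yᶜ := hle.trans inf_le_right
    have h3 : c ≤ y := h ((mem_atomsBelow (c := ⟨c, hc⟩)).mpr h1)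
    exact ((atom_le_compl hc).mp h2) h3

lemma atomsBelow_inj {x y : B} (h : atomsBelow x = atomsBelow y) : x = y :=
  le_antisymm (le_iff_atomsBelow.mpr h.le) (le_iff_atomsBelow.mpr h.ge)

/-- The join of a set of atoms. -/
def supSet' (S : Set {c : B // IsAtom c}) : B := S.toFinset.sup (fun c => c.1)

lemma atom_le_finsetSup {c : B} (hc : IsAtom c) {ι : Type*} {s : Finset ι} {f : ι → B}
    (h : c ≤ s.sup f) : ∃ i ∈ s, c ≤ f i := by
  classical
  induction s using Finset.induction_on with
  | empty => simp at h; exact absurd h hc.1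
  | insert a s hni ih =>
    rw [Finset.sup_insert] at h
    rcases atom_le_sup hc h with h' | h'
    · exact ⟨a, Finset.mem_insert_self a s, h'⟩
    · obtain ⟨i, hi, hI⟩ := ih h'
      exact ⟨i, Finset.mem_insert_of_mem hi, hI⟩

lemma atomsBelow_supSet' (S : Set {c : B // IsAtom c}) : atomsBelow (supSet' S) = S := by
  ext c
  constructor
  · intro h
    obtain ⟨i, hi, hI⟩ := atom_le_finsetSup c.2 h
    have : c = i := Subtype.ext ((i.2.le_iff.mp hI).resolve_left c.2.1)
    rw [this]; exact Set.mem_toFinset.mp hi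
  · intro h
    exact Finset.le_sup (Set.mem_toFinset.mpr h)

lemma supSet'_atomsBelow (x : B) : supSet' (atomsBelow x) = x :=
  atomsBelow_inj (by rw [atomsBelow_supSet'])

end Helpers

section Sub

variable {B : Type*} [Fintype B] [BooleanAlgebra B] {C D : Set B}

lemma mem_blocksOf {S : Set {c : B // IsAtom c}} :
    S ∈ blocksOf C ↔ ∃ d : B, IsAtomOf C d ∧ S = atomsBelow d := Iff.rfl

lemma IsBoolSubalgebra.finsetSup_mem (hC : IsBoolSubalgebra C) {ι : Type*} (s : Finset ι)
    (f : ι → B) (h : ∀ i ∈ s, f i ∈ C) : s.sup f ∈ C :=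
  Finset.sup_induction hC.1 (fun a ha b hb => hC.2.2.1 a ha b hb) h

lemma exists_atomOf_le (hC : IsBoolSubalgebra C) {z : B} (hz : z ∈ C) (hz' : z ≠ ⊥) :
    ∃ d, IsAtomOf C d ∧ d ≤ z := by
  have hne : ({w : B | w ∈ C ∧ w ≠ ⊥ ∧ w ≤ z}.toFinset : Finset B).Nonempty := by
    rw [Finset.nonempty_iff_ne_empty]
    intro hemp
    have : z ∈ {w : B | w ∈ C ∧ w ≠ ⊥ ∧ w ≤ z}.toFinset := by
      rw [Set.mem_toFinset]; exact ⟨hz, hz', le_rfl⟩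
    rw [hemp] at this
    exact absurd this (Finset.notMem_empty z)
  obtain ⟨m, hm, hmin⟩ : ∃ m ∈ {w : B | w ∈ C ∧ w ≠ ⊥ ∧ w ≤ z}.toFinset,
      ∀ x ∈ {w : B | w ∈ C ∧ w ≠ ⊥ ∧ w ≤ z}.toFinset, ¬x < m :=
    (Finset.exists_minimal hne).imp fun m hm => ⟨hm.1, fun x hx hlt => hlt.not_ge (hm.2 hx hlt.le)⟩
  rw [Set.mem_toFinset] at hm
  refine ⟨m, ⟨hm.1, hm.2.1, ?_⟩, hm.2.2⟩
  intro x hx hxne hxm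
  by_contra hne'
  exact hmin x (Set.mem_toFinset.mpr ⟨hx, hxne, hxm.trans hm.2.2⟩) (lt_of_le_of_ne hxm hne')

lemma exists_atomOf_above (hC : IsBoolSubalgebra C) (c : {c : B // IsAtom c}) :
    ∃ d, IsAtomOf C d ∧ c.1 ≤ d := by
  set d := (Finset.univ.filter (fun x : B => x ∈ C ∧ c.1 ≤ x)).inf id with hd
  have hdC : d ∈ C :=
    Finset.inf_induction hC.2.1 (fun a ha b hb => hC.2.2.2.1 a ha b hb)
      (fun i hi => (Finset.mem_filter.mp hi).2.1)
  have hcd : c.1 ≤ d := Finset.le_inf fun i hi => (Finset.mem_filter.mp hi).2.2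
  have hdle : ∀ x ∈ C, c.1 ≤ x → d ≤ x := fun x hx hcx =>
    Finset.inf_le (Finset.mem_filter.mpr ⟨Finset.mem_univ x, hx, hcx⟩)
  refine ⟨d, ⟨hdC, ?_, ?_⟩, hcd⟩
  · intro hb; exact c.2.1 (le_bot_iff.mp (hb ▸ hcd))
  · intro x hx hxne hxd
    by_cases hcx : c.1 ≤ x
    · exact le_antisymm hxd (hdle x hx hcx)
    · have h1 : d ≤ xᶜ := hdle xᶜ (hC.2.2.2.2 x hx) ((atom_le_compl c.2).mpr hcx)
      have h2 : x ≤ x ⊓ xᶜ := le_inf le_rfl (hxd.trans h1)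
      rw [inf_compl_eq_bot] at h2
      exact absurd (le_bot_iff.mp h2) hxne

lemma atomOf_eq_of_inf_ne_bot (hC : IsBoolSubalgebra C) {d e : B} (hd : IsAtomOf C d)
    (he : IsAtomOf C e) (h : d ⊓ e ≠ ⊥) : d = e := by
  have hmem : d ⊓ e ∈ C := hC.2.2.2.1 d hd.1 e he.1
  exact (hd.2.2 _ hmem h inf_le_left).symm.trans (he.2.2 _ hmem h inf_le_right)

lemma eq_sup_atomsOf (hC : IsBoolSubalgebra C) {x : B} (hx : x ∈ C) :
    x = (Finset.univ.filter (fun d : B => IsAtomOf C d ∧ d ≤ x)).sup id := by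
  set y := (Finset.univ.filter (fun d : B => IsAtomOf C d ∧ d ≤ x)).sup id with hy
  have hyC : y ∈ C := hC.finsetSup_mem _ _ (fun i hi => (Finset.mem_filter.mp hi).2.1.1)
  have hyx : y ≤ x := Finset.sup_le fun i hi => (Finset.mem_filter.mp hi).2.2
  by_contra hne
  have h1 : x ⊓ yᶜ ∈ C := hC.2.2.2.1 _ hx _ (hC.2.2.2.2 y hyC)
  have h2 : x ⊓ yᶜ ≠ ⊥ := by
    intro hb
    exact hne (le_antisymm (sdiff_eq_bot_iff.mp (by rw [sdiff_eq]; exact hb)) hyx)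
  obtain ⟨d, hdat, hdle⟩ := exists_atomOf_le hC h1 h2
  have hdx : d ≤ x := hdle.trans inf_le_left
  have hdy : d ≤ y := Finset.le_sup (f := id)
    (Finset.mem_filter.mpr ⟨Finset.mem_univ d, hdat, hdx⟩)
  have h3 : d ≤ y ⊓ yᶜ := le_inf hdy (hdle.trans inf_le_right)
  rw [inf_compl_eq_bot] at h3
  exact hdat.2.1 (le_bot_iff.mp h3)

lemma blocksOf_isPartition (hC : IsBoolSubalgebra C) : Setoid.IsPartition (blocksOf C) := by
  constructor
  · rintro ⟨d, hd, hS⟩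
    obtain ⟨c, hc⟩ := atomsBelow_nonempty hd.2.1
    have hc' : c ∈ {c : {c : B // IsAtom c} | c.1 ≤ d} := hc
    rw [← hS] at hc'
    exact hc'
  · intro c
    obtain ⟨d, hd, hcd⟩ := exists_atomOf_above hC c
    refine ⟨atomsBelow d, ⟨⟨d, hd, rfl⟩, hcd⟩, ?_⟩
    rintro S ⟨⟨e, he, rfl⟩, hce⟩
    have : e = d := atomOf_eq_of_inf_ne_bot hC he hd
      (fun hb => c.2.1 (le_bot_iff.mp (hb ▸ le_inf hce hcd)))
    rw [this]
    rfl

lemma refines_of_subset (hC : IsBoolSubalgebra C) (hD : IsBoolSubalgebra D) (h : C ⊆ D) :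
    ∀ S ∈ blocksOf D, ∃ T ∈ blocksOf C, S ⊆ T := by
  rintro S ⟨e, he, rfl⟩
  obtain ⟨c, hc⟩ := atomsBelow_nonempty he.2.1
  obtain ⟨d, hd, hcd⟩ := exists_atomOf_above hC c
  refine ⟨atomsBelow d, ⟨d, hd, rfl⟩, ?_⟩
  have hmem : e ⊓ d ∈ D := hD.2.2.2.1 e he.1 d (h hd.1)
  have hne : e ⊓ d ≠ ⊥ := fun hb => c.2.1 (le_bot_iff.mp (hb ▸ le_inf hc hcd))
  have hed : e ≤ d := by
    have : e ⊓ d = e := he.2.2 _ hmem hne inf_le_left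
    rw [← this]; exact inf_le_right
  exact le_iff_atomsBelow.mp hed

lemma subset_of_refines (hC : IsBoolSubalgebra C) (hD : IsBoolSubalgebra D)
    (h : ∀ S ∈ blocksOf D, ∃ T ∈ blocksOf C, S ⊆ T) : C ⊆ D := by
  have key : ∀ d : B, IsAtomOf C d → d ∈ D := by
    intro d hd
    set y := (Finset.univ.filter (fun e : B => IsAtomOf D e ∧ e ≤ d)).sup id with hy
    have hle1 : y ≤ d := Finset.sup_le fun i hi => (Finset.mem_filter.mp hi).2.2
    have hle2 : d ≤ y := by
      rw [le_iff_atomsBelow]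
      intro c hc
      obtain ⟨e, he, hce⟩ := exists_atomOf_above hD c
      obtain ⟨T, hT, hsub⟩ := h (atomsBelow e) ⟨e, he, rfl⟩
      obtain ⟨d', hd', rfl⟩ := hT
      have hcd' : c.1 ≤ d' := hsub hce
      have hdd : d' = d := atomOf_eq_of_inf_ne_bot hC hd' hd
        (fun hb => c.2.1 (le_bot_iff.mp (hb ▸ le_inf hcd' hc)))
      have hed : e ≤ d := by
        rw [le_iff_atomsBelow]
        intro c' hc'
        exact hdd ▸ hsub hc'
      exact mem_atomsBelow.mpr (le_trans hce (Finset.le_sup (f := id)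
        (Finset.mem_filter.mpr ⟨Finset.mem_univ e, he, hed⟩)))
    have hdy : d = y := le_antisymm hle2 hle1
    rw [hdy]
    exact hD.finsetSup_mem _ _ fun i hi => (Finset.mem_filter.mp hi).2.1.1
  intro x hx
  rw [eq_sup_atomsOf hC hx]
  exact hD.finsetSup_mem _ _ (fun i hi => key i (Finset.mem_filter.mp hi).2.1)

end Sub

section Surj

variable {B : Type*} [Fintype B] [BooleanAlgebra B]

/-- The Boolean subalgebra associated to a partition of the atoms. -/
def subalgOf (P : Set (Set {c : B // IsAtom c})) : Set B :=
  {x : B | ∀ T ∈ P, T ⊆ atomsBelow x ∨ T ∩ atomsBelow x = ∅}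

lemma block_eq_of_mem {P : Set (Set {c : B // IsAtom c})} (hP : Setoid.IsPartition P)
    {T T' : Set {c : B // IsAtom c}} (hT : T ∈ P) (hT' : T' ∈ P) {c : {c : B // IsAtom c}}
    (hc : c ∈ T) (hc' : c ∈ T') : T = T' := by
  obtain ⟨b, _, hun⟩ := hP.2 c
  rw [hun T ⟨hT, hc⟩, hun T' ⟨hT', hc'⟩]

lemma subalgOf_isBoolSubalgebra {P : Set (Set {c : B // IsAtom c})}
    (hP : Setoid.IsPartition P) : IsBoolSubalgebra (subalgOf P) := by
  refine ⟨?_, ?_, ?_, ?_, ?_⟩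
  · intro T hT
    right
    rw [atomsBelow_bot, Set.inter_empty]
  · intro T hT
    left
    rw [atomsBelow_top]
    exact Set.subset_univ T
  · intro x hx y hy T hT
    rw [atomsBelow_sup]
    rcases hx T hT with h1 | h1
    · exact Or.inl (h1.trans Set.subset_union_left)
    · rcases hy T hT with h2 | h2
      · exact Or.inl (h2.trans Set.subset_union_right)
      · right
        rw [Set.inter_union_distrib_left, h1, h2, Set.union_empty]
  · intro x hx y hy T hT
    rw [atomsBelow_inf]
    rcases hx T hT with h1 | h1
    · rcases hy T hT with h2 | h2
      · exact Or.inl (Set.subset_inter h1 h2)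
      · right
        exact Set.eq_empty_of_subset_empty
          (h2 ▸ Set.inter_subset_inter_right T Set.inter_subset_right)
    · right
      exact Set.eq_empty_of_subset_empty
        (h1 ▸ Set.inter_subset_inter_right T Set.inter_subset_left)
  · intro x hx T hT
    rw [atomsBelow_compl]
    rcases hx T hT with h1 | h1
    · right
      exact Set.eq_empty_iff_forall_notMem.mpr fun c hc => hc.2 (h1 hc.1)
    · left
      intro c hc hcx
      exact Set.eq_empty_iff_forall_notMem.mp h1 c ⟨hc, hcx⟩

lemma supSet'_isAtomOf {P : Set (Set {c : B // IsAtom c})} (hP : Setoid.IsPartition P)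
    {T : Set {c : B // IsAtom c}} (hT : T ∈ P) : IsAtomOf (subalgOf P) (supSet' T) := by
  have hTne : T.Nonempty := Set.nonempty_iff_ne_empty.mpr (fun h => hP.1 (h ▸ hT))
  have hat : atomsBelow (supSet' T) = T := atomsBelow_supSet' T
  refine ⟨?_, ?_, ?_⟩
  · intro T' hT'
    by_cases h : T' = T
    · left; rw [hat, h]
    · right
      rw [hat, Set.eq_empty_iff_forall_notMem]
      rintro c ⟨hc1, hc2⟩
      exact h (block_eq_of_mem hP hT' hT hc1 hc2)
  · intro hb
    rw [hb, atomsBelow_bot] at hat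
    exact hP.1 (hat ▸ hT)
  · intro x hx hxne hxle
    have hsub : atomsBelow x ⊆ T := hat ▸ le_iff_atomsBelow.mp hxle
    obtain ⟨c, hc⟩ := atomsBelow_nonempty hxne
    rcases hx T hT with h1 | h1
    · exact atomsBelow_inj (by rw [hat]; exact le_antisymm hsub h1 : atomsBelow x = atomsBelow (supSet' T))
    · exact absurd (Set.eq_empty_iff_forall_notMem.mp h1 c ⟨hsub hc, hc⟩) not_false

lemma blocksOf_subalgOf {P : Set (Set {c : B // IsAtom c})} (hP : Setoid.IsPartition P) :
    blocksOf (subalgOf P) = P := by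
  ext S
  constructor
  · rintro ⟨d, hd, rfl⟩
    obtain ⟨c, hc⟩ := atomsBelow_nonempty hd.2.1
    obtain ⟨T, ⟨hT, hcT⟩, _⟩ := hP.2 c
    rcases hd.1 T hT with h1 | h1
    · have h2 : supSet' T ≤ d := le_iff_atomsBelow.mpr (by rw [atomsBelow_supSet']; exact h1)
      have h3 : supSet' T ≠ ⊥ := (supSet'_isAtomOf hP hT).2.1
      have h4 : supSet' T = d := hd.2.2 _ (supSet'_isAtomOf hP hT).1 h3 h2
      have : atomsBelow d = T := by rw [← h4, atomsBelow_supSet']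
      show {c : {c : B // IsAtom c} | c.1 ≤ d} ∈ P
      rw [show {c : {c : B // IsAtom c} | c.1 ≤ d} = atomsBelow d from rfl, this]
      exact hT
    · exact absurd (Set.eq_empty_iff_forall_notMem.mp h1 c ⟨hcT, hc⟩) not_false
  · intro hS
    exact ⟨supSet' S, supSet'_isAtomOf hP hS, (atomsBelow_supSet' S).symm⟩

end Surj

/-- The map sending a Boolean subalgebra `C` of `B` to the partition of
the atoms of `B` whose blocks are the sets of atoms below the atoms of `C` is a bijection
from the Boolean subalgebras of `B` onto the set partitions of the atoms of `B`; moreover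
`C ⊆ D` iff the partition of `D` refines the partition of `C`. -/
theorem boolSubalgebra_partition_bijection {B : Type*} [Fintype B] [BooleanAlgebra B]
    [Nontrivial B] :
    Set.BijOn blocksOf {C : Set B | IsBoolSubalgebra C}
      {P : Set (Set {c : B // IsAtom c}) | Setoid.IsPartition P} ∧
    ∀ C D : Set B, IsBoolSubalgebra C → IsBoolSubalgebra D →
      (C ⊆ D ↔ ∀ S ∈ blocksOf D, ∃ T ∈ blocksOf C, S ⊆ T) := by
  constructor
  · refine ⟨fun C hC => blocksOf_isPartition hC, fun C hC D hD heq => ?_, fun P hP => ?_⟩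
    · exact Set.Subset.antisymm
        (subset_of_refines hC hD (fun S hS => ⟨S, heq.symm ▸ hS, subset_rfl⟩))
        (subset_of_refines hD hC (fun S hS => ⟨S, heq ▸ hS, subset_rfl⟩))
    · exact ⟨subalgOf P, subalgOf_isBoolSubalgebra hP, blocksOf_subalgOf hP⟩
  · intro C D hC hD
    exact ⟨refines_of_subset hC hD, subset_of_refines hC hD⟩
end
end
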